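/- With F(x,y) = c(x²)/(1 − x y c(x²)) and c = c(x²) the Catalan generating function, the generating function G(x,y,z) for nonnegative Dyck paths from (0,j₁) to (i,j₂) (weighted x^i y^{j₁} z^{j₂}) satisfies G(x,y,z) = F(x,y)·F(x,z) / (c(x²)·(1 − yz)). -/

import Mathlib

open MvPowerSeries in
/-- `c(x²)` as a three-variable formal power series (variables `x = X 0`, `y = X 1`,
`z = X 2`), where `c` is the Catalan generating function. -/
noncomputable def catalanX2 : MvPowerSeries (Fin 3) ℚ :=
  fun d =>
    if d 1 = 0 ∧ d 2 = 0 ∧ d 0 % 2 = 0 then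
      (Nat.choose (d 0) (d 0 / 2) : ℚ) / (d 0 / 2 + 1)
    else 0

/-- The generating function `G(x,y,z) = Σ #P(i,j₁,j₂) x^i y^{j₁} z^{j₂}` counting
nonnegative Dyck paths from `(0,j₁)` to `(i,j₂)`: `i` steps `±1` starting at height
`j₁`, ending at height `j₂`, all intermediate heights `≥ 0`. -/
noncomputable def Ggf : MvPowerSeries (Fin 3) ℚ :=
  fun d =>
    (Nat.card {p : Fin (d 0) → ℤ //
        (∀ i, p i = 1 ∨ p i = -1) ∧
        (∀ j : Fin (d 0), 0 ≤ (d 1 : ℤ) + ∑ i ∈ Finset.univ.filter (· ≤ j), p i) ∧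
        (d 1 : ℤ) + ∑ i, p i = (d 2 : ℤ)} : ℚ)

open MvPowerSeries in
/-- `F(x,y)` with `F` the Dyck-path generating function `c(x²)/(1 − x y c(x²))`. -/
noncomputable def Fxy : MvPowerSeries (Fin 3) ℚ :=
  catalanX2 * (1 - X 0 * X 1 * catalanX2)⁻¹

open MvPowerSeries in
/-- `F(x,z)`. -/
noncomputable def Fxz : MvPowerSeries (Fin 3) ℚ :=
  catalanX2 * (1 - X 0 * X 2 * catalanX2)⁻¹

open Finset

noncomputable def gam (n : ℕ) : ℚ := if n % 2 = 0 then (catalan (n/2) : ℚ) else 0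

lemma gam_zero : gam 0 = 1 := by simp [gam]

lemma sum_even_vanish (f : ℕ → ℚ) (hf : ∀ k, k % 2 = 1 → f k = 0) (m : ℕ) :
    ∑ k ∈ range (2*m+1), f k = ∑ j ∈ range (m+1), f (2*j) := by
  induction m with
  | zero => simp
  | succ m ih =>
    have h : 2*(m+1)+1 = (2*m+1)+1+1 := by ring
    rw [h, sum_range_succ, sum_range_succ, ih, sum_range_succ,
      hf (2*m+1) (by omega)]
    rw [show 2*m+1+1 = 2*(m+1) by ring, add_zero, ← sum_range_succ, ← sum_range_succ]

lemma gam_conv (n : ℕ) : gam (n+2) = ∑ k ∈ range (n+1), gam k * gam (n-k) := by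
  rcases Nat.even_or_odd n with ⟨m, hm⟩ | ⟨m, hm⟩
  · have hn : n = 2*m := by omega
    subst hn
    rw [sum_even_vanish _ (fun k hk => by simp [gam, hk])]
    have h1 : ∀ j ∈ range (m+1), gam (2*j) * gam (2*m - 2*j) =
        ((catalan j * catalan (m-j) : ℕ) : ℚ) := by
      intro j hj
      have h2 : 2*m - 2*j = 2*(m-j) := by omega
      simp [gam, h2, Nat.mul_div_cancel_left _ (by norm_num : 0 < 2), Nat.mul_mod_right]
    rw [sum_congr rfl h1, ← Nat.cast_sum]
    have : gam (2*m+2) = ((catalan (m+1) : ℕ) : ℚ) := by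
      have h3 : (2*m+2)/2 = m+1 := by omega
      simp [gam, h3, Nat.add_mul_mod_self_left]
    rw [this]
    congr 1
    rw [catalan_succ' m, Finset.Nat.sum_antidiagonal_eq_sum_range_succ_mk]
  · have hn : n = 2*m+1 := by omega
    subst hn
    have hL : gam (2*m+1+2) = 0 := by simp [gam]
    rw [hL, eq_comm]
    apply sum_eq_zero
    intro k hk
    simp only [mem_range] at hk
    rcases Nat.even_or_odd k with ⟨j, hj⟩ | ⟨j, hj⟩
    · have : (2*m+1-k) % 2 = 1 := by omega
      simp [gam, this]
    · have : k % 2 = 1 := by omega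
      simp [gam, this]

noncomputable def bal : ℕ → ℕ → ℚ
  | 0, m => if m = 0 then 1 else 0
  | i+1, m => bal i (m+1) + if m = 0 then 0 else bal i (m-1)

lemma bal_main : ∀ i : ℕ, (bal i 0 = gam i) ∧
    (∀ m, bal (i+1) (m+1) = ∑ n ∈ range (i+1), gam n * bal (i-n) m) := by
  intro i
  induction i using Nat.strong_induction_on with
  | _ i IH =>
    have P1 : bal i 0 = gam i := by
      match i with
      | 0 => simp [bal, gam]
      | 1 => simp [bal, gam]
      | (j+2) =>
        have h1 : bal (j+2) 0 = bal (j+1) 1 := by simp [bal]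
        have h2 : bal (j+1) 1 = ∑ n ∈ range (j+1), gam n * bal (j-n) 0 :=
          (IH j (by omega)).2 0
        have h3 : ∀ n ∈ range (j+1), gam n * bal (j-n) 0 = gam n * gam (j-n) := by
          intro n _
          rw [(IH (j-n) (by omega)).1]
        rw [h1, h2, sum_congr rfl h3, ← gam_conv]
    refine ⟨P1, ?_⟩
    intro m
    match i with
    | 0 =>
      simp only [bal, zero_add, sum_range_one, gam_zero, one_mul, Nat.zero_sub]
      simp
    | (j+1) =>
      have hdef : bal (j+2) (m+1) = bal (j+1) (m+2) + bal (j+1) m := by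
        simp [bal]
      have hA : bal (j+1) (m+2) = ∑ n ∈ range (j+1), gam n * bal (j-n) (m+1) :=
        (IH j (by omega)).2 (m+1)
      have hRHS : ∑ n ∈ range (j+2), gam n * bal (j+1-n) m
          = (∑ n ∈ range (j+1), gam n * bal (j-n) (m+1))
            + ((if m = 0 then 0 else ∑ n ∈ range (j+1), gam n * bal (j-n) (m-1))
               + gam (j+1) * bal 0 m) := by
        rw [sum_range_succ]
        have hterm : ∀ n ∈ range (j+1), gam n * bal (j+1-n) m
            = gam n * bal (j-n) (m+1) + gam n * (if m = 0 then 0 else bal (j-n) (m-1)) := by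
          intro n hn
          simp only [mem_range] at hn
          have : j+1-n = (j-n)+1 := by omega
          rw [this]
          simp only [bal]
          rcases Nat.eq_zero_or_pos m with hm | hm
          · simp [hm]
          · have hm' : ¬ m = 0 := by omega
            simp [hm', mul_add]
        rw [sum_congr rfl hterm, sum_add_distrib]
        rcases Nat.eq_zero_or_pos m with hm | hm
        · subst hm
          simp only [if_pos rfl]
          rw [Nat.sub_self]
          simp
        · have hm' : ¬ m = 0 := by omega
          simp only [hm', if_false]
          rw [Nat.sub_self]
          ring
      rw [hdef, hA, hRHS, add_right_inj]
      rcases Nat.eq_zero_or_pos m with hm | hm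
      · subst hm
        rw [P1]
        simp [bal, gam_zero]
      · obtain ⟨m', rfl⟩ : ∃ m', m = m' + 1 := ⟨m-1, by omega⟩
        have hB : bal (j+1) (m'+1) = ∑ n ∈ range (j+1), gam n * bal (j-n) m' :=
          (IH j (by omega)).2 m'
        rw [hB]
        simp [bal]

lemma bal_zero (i : ℕ) : bal i 0 = gam i := (bal_main i).1

lemma bal_conv (i m : ℕ) :
    bal (i+1) (m+1) = ∑ n ∈ range (i+1), gam n * bal (i-n) m := (bal_main i).2 m

noncomputable def r (i a b : ℕ) : ℚ := ∑ k ∈ range (min a b + 1), bal i (a + b - 2*k)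

lemma r_zero (a b : ℕ) : r 0 a b = if a = b then 1 else 0 := by
  unfold r
  rcases eq_or_ne a b with h | h
  · subst h
    rw [if_pos rfl]
    have h1 : ∀ k ∈ range (min a a + 1), bal 0 (a + a - 2*k)
        = if k = a then 1 else 0 := by
      intro k hk
      simp only [mem_range, min_self] at hk
      simp only [bal]
      by_cases hka : k = a
      · subst hka; simp [Nat.sub_self, two_mul]
      · rw [if_neg (by omega), if_neg hka]
    rw [sum_congr rfl h1, sum_ite_eq' (range (min a a + 1)) a]
    simp
  · rw [if_neg h]
    apply sum_eq_zero
    intro k hk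
    simp only [mem_range] at hk
    simp only [bal]
    rw [if_neg (by omega)]

lemma bal_succ (i m : ℕ) :
    bal (i+1) m = bal i (m+1) + if m = 0 then 0 else bal i (m-1) := by simp [bal]

lemma bal_congr (i : ℕ) {x y : ℕ} (h : x = y) : bal i x = bal i y := by rw [h]

lemma r_rec (i a b : ℕ) :
    r (i+1) a b = r i (a+1) b + if a = 0 then 0 else r i (a-1) b := by
  unfold r
  rw [sum_congr rfl (fun k _ => bal_succ i (a+b-2*k)), sum_add_distrib]
  rcases lt_trichotomy a b with hab | hab | hab
  · -- a < b
    have hmin1 : min a b = a := by omega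
    have hmin2 : min (a+1) b = a+1 := by omega
    have hmin3 : min (a-1) b = a-1 := by omega
    rw [hmin1, hmin2, hmin3]
    have h1 : ∀ k ∈ range (a+1), bal i (a+b-2*k+1) = bal i (a+1+b-2*k) := by
      intro k hk; simp only [mem_range] at hk; refine bal_congr i ?_; omega
    have h2 : ∀ k ∈ range (a+1), (if a+b-2*k = 0 then (0:ℚ) else bal i (a+b-2*k-1))
        = bal i (a+b-2*k-1) := by
      intro k hk; simp only [mem_range] at hk; rw [if_neg (show ¬ a+b-2*k = 0 by omega)]
    have hsplit : ∑ x ∈ range (a+1), bal i (a+b-2*x-1)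
        = (if a = 0 then (0:ℚ) else ∑ k ∈ range (a-1+1), bal i (a-1+b-2*k))
          + bal i (a+1+b-2*(a+1)) := by
      rw [sum_range_succ]
      rcases Nat.eq_zero_or_pos a with ha | ha
      · subst ha
        rw [if_pos rfl, sum_range_zero, zero_add, zero_add, zero_add]
        refine bal_congr i ?_; omega
      · rw [if_neg (show ¬ a = 0 by omega)]
        congr 1
        · rw [show a-1+1 = a by omega]
          apply sum_congr rfl; intro k hk; simp only [mem_range] at hk
          refine bal_congr i ?_; omega
        · refine bal_congr i ?_; omega
    rw [sum_congr rfl h1, sum_congr rfl h2, hsplit, sum_range_succ _ (a+1)]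
    ring
  · -- a = b
    subst hab
    have hmin2 : min (a+1) a = a := by omega
    rw [min_self, hmin2]
    have h1 : ∀ k ∈ range (a+1), bal i (a+a-2*k+1) = bal i (a+1+a-2*k) := by
      intro k hk; simp only [mem_range] at hk; refine bal_congr i ?_; omega
    have hsplit : ∑ x ∈ range (a+1), (if a+a-2*x = 0 then (0:ℚ) else bal i (a+a-2*x-1))
        = ∑ k ∈ range a, bal i (a-1+a-2*k) := by
      rw [sum_range_succ, if_pos (show a+a-2*a = 0 by omega), add_zero]
      apply sum_congr rfl; intro k hk; simp only [mem_range] at hk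
      rw [if_neg (show ¬ a+a-2*k = 0 by omega)]; refine bal_congr i ?_; omega
    rw [sum_congr rfl h1, hsplit]
    rcases Nat.eq_zero_or_pos a with ha | ha
    · subst ha; simp
    · rw [if_neg (show ¬ a = 0 by omega), show min (a-1) a = a-1 by omega, show a-1+1 = a by omega]
  · -- b < a
    have hmin1 : min a b = b := by omega
    have hmin2 : min (a+1) b = b := by omega
    have hmin3 : min (a-1) b = b := by omega
    rw [hmin1, hmin2, if_neg (by omega : ¬ a = 0), hmin3]
    have h1 : ∀ k ∈ range (b+1), bal i (a+b-2*k+1) = bal i (a+1+b-2*k) := by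
      intro k hk; simp only [mem_range] at hk; refine bal_congr i ?_; omega
    have h2 : ∀ k ∈ range (b+1), (if a+b-2*k = 0 then (0:ℚ) else bal i (a+b-2*k-1))
        = bal i (a-1+b-2*k) := by
      intro k hk; simp only [mem_range] at hk
      rw [if_neg (show ¬ a+b-2*k = 0 by omega)]; refine bal_congr i ?_; omega
    rw [sum_congr rfl h1, sum_congr rfl h2]

def PathSet (n a b : ℕ) : Type :=
  {p : Fin n → ℤ //
    (∀ i, p i = 1 ∨ p i = -1) ∧
    (∀ j : Fin n, 0 ≤ (a : ℤ) + ∑ i ∈ Finset.univ.filter (· ≤ j), p i) ∧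
    (a : ℤ) + ∑ i, p i = (b : ℤ)}

instance pathSetFinite (n a b : ℕ) : Finite (PathSet n a b) := by
  apply Finite.of_injective (fun x : PathSet n a b => (fun k => decide (x.1 k = 1) : Fin n → Bool))
  intro x y h
  apply Subtype.ext
  funext k
  have hk := congrFun h k
  rcases x.2.1 k with hx | hx <;> rcases y.2.1 k with hy | hy <;>
    simp [hx, hy] at hk ⊢ <;> omega

lemma card_zero' (a b : ℕ) : Nat.card (PathSet 0 a b) = if a = b then 1 else 0 := by
  rcases eq_or_ne a b with h | h
  · subst h
    rw [if_pos rfl]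
    have huniq : ∀ x y : PathSet 0 a a, x = y := by
      intro x y; apply Subtype.ext; funext k; exact k.elim0
    have hne : Nonempty (PathSet 0 a a) := by
      refine ⟨⟨fun k => k.elim0, fun k => k.elim0, fun j => j.elim0, ?_⟩⟩
      simp
    obtain ⟨x⟩ := hne
    haveI : Unique (PathSet 0 a a) := ⟨⟨x⟩, fun y => huniq y x⟩
    exact Nat.card_unique
  · rw [if_neg h]
    have : IsEmpty (PathSet 0 a b) := by
      constructor
      rintro ⟨p, h1, h2, h3⟩
      simp only [Finset.univ_eq_empty, Finset.sum_empty, add_zero] at h3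
      exact h (by exact_mod_cast h3)
    exact Nat.card_of_isEmpty

lemma filter_le_zero_sum {n : ℕ} (p : Fin (n+1) → ℤ) :
    ∑ i ∈ Finset.univ.filter (· ≤ (0 : Fin (n+1))), p i = p 0 := by
  have h : Finset.univ.filter (· ≤ (0 : Fin (n+1))) = {0} := by
    ext k; simp [Fin.le_zero_iff]
  rw [h, Finset.sum_singleton]

lemma filter_le_succ_sum {n : ℕ} (p : Fin (n+1) → ℤ) (j : Fin n) :
    ∑ i ∈ Finset.univ.filter (· ≤ j.succ), p i
      = p 0 + ∑ i ∈ Finset.univ.filter (· ≤ j), p i.succ := by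
  rw [Finset.sum_filter, Fin.sum_univ_succ, Finset.sum_filter]
  rw [if_pos (Fin.zero_le _)]
  congr 1
  apply Finset.sum_congr rfl
  intro k _
  simp [Fin.succ_le_succ_iff]

def consZ {n : ℕ} (s : ℤ) (q : Fin n → ℤ) : Fin (n+1) → ℤ := Fin.cons s q

@[simp] lemma consZ_zero {n : ℕ} (s : ℤ) (q : Fin n → ℤ) : consZ s q 0 = s := rfl

@[simp] lemma consZ_succ {n : ℕ} (s : ℤ) (q : Fin n → ℤ) (k : Fin n) :
    consZ s q k.succ = q k := by simp [consZ]

lemma consZ_sum {n : ℕ} (s : ℤ) (q : Fin n → ℤ) :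
    ∑ i, consZ s q i = s + ∑ i, q i := by
  rw [Fin.sum_univ_succ]
  simp

lemma consZ_self_tail {n : ℕ} (p : Fin (n+1) → ℤ) : consZ (p 0) (Fin.tail p) = p := by
  funext k
  exact congrFun (Fin.cons_self_tail p) k

lemma cons_cond {n a b : ℕ} (s : ℤ) (hs : s = 1 ∨ s = -1) (a' : ℕ)
    (ha' : (a' : ℤ) = a + s) (hnn : 0 ≤ (a : ℤ) + s)
    (q : Fin n → ℤ)
    (hq1 : ∀ i, q i = 1 ∨ q i = -1)
    (hq2 : ∀ j : Fin n, 0 ≤ (a' : ℤ) + ∑ i ∈ Finset.univ.filter (· ≤ j), q i)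
    (hq3 : (a' : ℤ) + ∑ i, q i = (b : ℤ)) :
    (∀ i, consZ s q i = 1 ∨ consZ s q i = -1) ∧
    (∀ j : Fin (n+1), 0 ≤ (a : ℤ) + ∑ i ∈ Finset.univ.filter (· ≤ j), consZ s q i) ∧
    (a : ℤ) + ∑ i, consZ s q i = (b : ℤ) := by
  refine ⟨?_, ?_, ?_⟩
  · intro i
    refine Fin.cases ?_ ?_ i
    · simpa using hs
    · intro k; rw [consZ_succ s q k]; exact hq1 k
  · intro j
    refine Fin.cases ?_ ?_ j
    · rw [filter_le_zero_sum, consZ_zero s q]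
      exact hnn
    · intro j'
      rw [filter_le_succ_sum, consZ_zero s q]
      have heq : ∑ i ∈ Finset.univ.filter (· ≤ j'), consZ s q i.succ
          = ∑ i ∈ Finset.univ.filter (· ≤ j'), q i :=
        Finset.sum_congr rfl fun k _ => consZ_succ s q k
      rw [heq]
      have := hq2 j'
      rw [ha'] at this
      linarith
  · rw [consZ_sum]
    rw [ha'] at hq3
    linarith

lemma tail_cond {n a b : ℕ} (p : Fin (n+1) → ℤ)
    (h1 : ∀ i, p i = 1 ∨ p i = -1)
    (h2 : ∀ j : Fin (n+1), 0 ≤ (a : ℤ) + ∑ i ∈ Finset.univ.filter (· ≤ j), p i)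
    (h3 : (a : ℤ) + ∑ i, p i = (b : ℤ))
    (a' : ℕ) (ha' : (a' : ℤ) = a + p 0) :
    (∀ i, Fin.tail p i = 1 ∨ Fin.tail p i = -1) ∧
    (∀ j : Fin n, 0 ≤ (a' : ℤ) + ∑ i ∈ Finset.univ.filter (· ≤ j), Fin.tail p i) ∧
    (a' : ℤ) + ∑ i, Fin.tail p i = (b : ℤ) := by
  refine ⟨fun k => h1 k.succ, ?_, ?_⟩
  · intro j
    have h := h2 j.succ
    rw [filter_le_succ_sum] at h
    have heq : ∑ i ∈ Finset.univ.filter (· ≤ j), Fin.tail p i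
        = ∑ i ∈ Finset.univ.filter (· ≤ j), p i.succ := rfl
    rw [ha', heq]
    linarith
  · rw [Fin.sum_univ_succ] at h3
    have heq : ∑ i : Fin n, Fin.tail p i = ∑ i : Fin n, p i.succ := rfl
    rw [ha', heq]
    linarith

noncomputable def fwdPos (n a b : ℕ) :
    PathSet n (a+2) b ⊕ PathSet n a b → PathSet (n+1) (a+1) b := fun x =>
  match x with
  | Sum.inl q => ⟨consZ 1 q.1,
      cons_cond 1 (Or.inl rfl) (a+2) (by omega) (by omega)
        q.1 q.2.1 q.2.2.1 q.2.2.2⟩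
  | Sum.inr q => ⟨consZ (-1) q.1,
      cons_cond (-1) (Or.inr rfl) a (by omega) (by omega)
        q.1 q.2.1 q.2.2.1 q.2.2.2⟩

lemma fwdPos_bij (n a b : ℕ) : Function.Bijective (fwdPos n a b) := by
  constructor
  · rintro (q | q) (q' | q') h <;>
      have hval := congrArg Subtype.val h
    · refine congrArg Sum.inl (Subtype.ext ?_)
      funext k
      have := congrFun hval k.succ
      simpa [fwdPos] using this
    · exfalso
      have := congrFun hval 0
      simp [fwdPos] at this
    · exfalso
      have := congrFun hval 0
      simp [fwdPos] at this
    · refine congrArg Sum.inr (Subtype.ext ?_)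
      funext k
      have := congrFun hval k.succ
      simpa [fwdPos] using this
  · rintro ⟨p, hp⟩
    by_cases h : p 0 = 1
    · refine ⟨Sum.inl ⟨Fin.tail p, tail_cond p hp.1 hp.2.1 hp.2.2 (a+2)
        (by rw [h]; omega)⟩, Subtype.ext ?_⟩
      show consZ 1 (Fin.tail p) = p
      rw [← h, consZ_self_tail]
    · have h' : p 0 = -1 := (hp.1 0).resolve_left h
      refine ⟨Sum.inr ⟨Fin.tail p, tail_cond p hp.1 hp.2.1 hp.2.2 a
        (by rw [h']; omega)⟩, Subtype.ext ?_⟩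
      show consZ (-1) (Fin.tail p) = p
      rw [← h', consZ_self_tail]

lemma card_succ_pos (n a b : ℕ) :
    Nat.card (PathSet (n+1) (a+1) b)
      = Nat.card (PathSet n (a+2) b) + Nat.card (PathSet n a b) := by
  have h := Nat.card_eq_of_bijective _ (fwdPos_bij n a b)
  rw [Nat.card_sum] at h
  omega

noncomputable def fwdZero (n b : ℕ) : PathSet n 1 b → PathSet (n+1) 0 b := fun q =>
  ⟨consZ 1 q.1,
    cons_cond 1 (Or.inl rfl) 1 (by omega) (by omega)
      q.1 q.2.1 q.2.2.1 q.2.2.2⟩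

lemma fwdZero_bij (n b : ℕ) : Function.Bijective (fwdZero n b) := by
  constructor
  · rintro q q' h
    have hval := congrArg Subtype.val h
    refine Subtype.ext ?_
    funext k
    have := congrFun hval k.succ
    simpa [fwdZero] using this
  · rintro ⟨p, hp⟩
    have h : p 0 = 1 := by
      have h0 := hp.2.1 0
      rw [filter_le_zero_sum] at h0
      rcases hp.1 0 with h | h
      · exact h
      · rw [h] at h0; omega
    refine ⟨⟨Fin.tail p, tail_cond p hp.1 hp.2.1 hp.2.2 1
      (by rw [h]; omega)⟩, Subtype.ext ?_⟩
    show consZ 1 (Fin.tail p) = p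
    rw [← h, consZ_self_tail]

lemma card_succ_zero (n b : ℕ) :
    Nat.card (PathSet (n+1) 0 b) = Nat.card (PathSet n 1 b) :=
  (Nat.card_eq_of_bijective _ (fwdZero_bij n b)).symm

lemma card_eq_r (i a b : ℕ) : (Nat.card (PathSet i a b) : ℚ) = r i a b := by
  induction i generalizing a b with
  | zero =>
    rw [card_zero', r_zero]
    split <;> simp
  | succ i ih =>
    match a with
    | 0 =>
      rw [card_succ_zero, r_rec, if_pos rfl, add_zero, ih]
    | (a'+1) =>
      rw [card_succ_pos, r_rec, if_neg (by omega), Nat.cast_add, ih, ih]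
      norm_num

lemma cat_coeff (d : Fin 3 →₀ ℕ) :
    catalanX2 d = if d 1 = 0 ∧ d 2 = 0 then gam (d 0) else 0 := by
  unfold catalanX2 gam
  by_cases h12 : d 1 = 0 ∧ d 2 = 0
  · rcases h12 with ⟨h1, h2⟩
    simp only [h1, h2, true_and, if_true]
    by_cases he : d 0 % 2 = 0
    · rw [if_pos he, if_pos he]
      obtain ⟨n, hn⟩ : ∃ n, d 0 = 2 * n := ⟨d 0 / 2, by omega⟩
      rw [hn, Nat.mul_div_cancel_left _ (by norm_num)]
      have hdiv : ((2*n : ℕ) : ℚ) / 2 = (n : ℚ) := by push_cast; ring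
      rw [hdiv]
      have hcb : (n+1) * catalan n = Nat.centralBinom n := succ_mul_catalan_eq_centralBinom n
      have hcb2 : Nat.centralBinom n = Nat.choose (2*n) n := rfl
      rw [eq_comm, eq_div_iff (by positivity)]
      rw [← hcb2, ← hcb]
      push_cast
      ring
    · rw [if_neg he, if_neg he]
  · rw [if_neg (by tauto), if_neg h12]

lemma coeff_mul_cat (φ : MvPowerSeries (Fin 3) ℚ) (d : Fin 3 →₀ ℕ) :
    MvPowerSeries.coeff d (φ * catalanX2)
      = ∑ n ∈ range (d 0 + 1), φ (d - Finsupp.single 0 n) * gam n := by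
  classical
  rw [MvPowerSeries.coeff_mul]
  have hvan : ∀ p ∈ Finset.HasAntidiagonal.antidiagonal d,
      MvPowerSeries.coeff p.1 φ * MvPowerSeries.coeff p.2 catalanX2 ≠ 0 →
      (p.2 1 = 0 ∧ p.2 2 = 0) := by
    intro p _ hp
    by_contra hcon
    apply hp
    have : MvPowerSeries.coeff p.2 catalanX2 = 0 := by
      rw [MvPowerSeries.coeff_apply, cat_coeff, if_neg hcon]
    rw [this, mul_zero]
  rw [← Finset.sum_filter_of_ne hvan]
  refine Finset.sum_nbij' (fun p => p.2 0)
    (fun n => (d - Finsupp.single 0 n, Finsupp.single 0 n)) ?_ ?_ ?_ ?_ ?_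
  · rintro ⟨p1, p2⟩ hp
    simp only [Finset.mem_filter, Finset.HasAntidiagonal.mem_antidiagonal] at hp
    have := congrArg (fun f : Fin 3 →₀ ℕ => f 0) hp.1
    simp only [Finsupp.add_apply] at this
    simp only [mem_range]
    omega
  · rintro n hn
    simp only [mem_range] at hn
    simp only [Finset.mem_filter, Finset.HasAntidiagonal.mem_antidiagonal]
    refine ⟨?_, ?_, ?_⟩
    · exact tsub_add_cancel_of_le (Finsupp.single_le_iff.mpr (by omega))
    · rw [Finsupp.single_apply, if_neg (by decide : ¬ (0:Fin 3) = 1)]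
    · rw [Finsupp.single_apply, if_neg (by decide : ¬ (0:Fin 3) = 2)]
  · rintro ⟨p1, p2⟩ hp
    simp only [Finset.mem_filter, Finset.HasAntidiagonal.mem_antidiagonal] at hp
    obtain ⟨hsum, h1, h2⟩ := hp
    have hp2 : p2 = Finsupp.single 0 (p2 0) := by
      ext x
      fin_cases x <;> simp [Finsupp.single_apply, h1, h2]
    have hp1 : p1 = d - Finsupp.single 0 (p2 0) := by
      rw [← hp2]
      exact eq_tsub_of_add_eq hsum
    rw [Prod.mk.injEq]
    exact ⟨hp1.symm, hp2.symm⟩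
  · intro n _
    exact Finsupp.single_eq_same
  · rintro ⟨p1, p2⟩ hp
    simp only [Finset.mem_filter, Finset.HasAntidiagonal.mem_antidiagonal] at hp
    obtain ⟨hsum, h1, h2⟩ := hp
    have hp2 : p2 = Finsupp.single 0 (p2 0) := by
      ext x
      fin_cases x <;> simp [Finsupp.single_apply, h1, h2]
    have hp1 : p1 = d - Finsupp.single 0 (p2 0) := by
      rw [← hp2]
      exact eq_tsub_of_add_eq hsum
    simp only [MvPowerSeries.coeff_apply]
    rw [cat_coeff, if_pos ⟨h1, h2⟩, ← hp1]

open MvPowerSeries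

lemma X_mul_X (s t : Fin 3) : (X s * X t : MvPowerSeries (Fin 3) ℚ)
    = monomial (Finsupp.single s 1 + Finsupp.single t 1) 1 := by
  rw [X_def, X_def, monomial_mul_monomial, one_mul]

noncomputable def Sser : MvPowerSeries (Fin 3) ℚ := fun d => r (d 0) (d 1) (d 2)
noncomputable def Wser : MvPowerSeries (Fin 3) ℚ := fun d => bal (d 0) (d 1 + d 2)
noncomputable def CTz : MvPowerSeries (Fin 3) ℚ :=
  fun d => if d 1 = 0 then bal (d 0) (d 2) else 0

noncomputable def m12 : Fin 3 →₀ ℕ := Finsupp.single 1 1 + Finsupp.single 2 1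
noncomputable def m01 : Fin 3 →₀ ℕ := Finsupp.single 0 1 + Finsupp.single 1 1
noncomputable def m02 : Fin 3 →₀ ℕ := Finsupp.single 0 1 + Finsupp.single 2 1

lemma m12_app : m12 0 = 0 ∧ m12 1 = 1 ∧ m12 2 = 1 := by
  refine ⟨?_, ?_, ?_⟩ <;> simp [m12, Finsupp.single_apply]
lemma m01_app : m01 0 = 1 ∧ m01 1 = 1 ∧ m01 2 = 0 := by
  refine ⟨?_, ?_, ?_⟩ <;> simp [m01, Finsupp.single_apply]
lemma m02_app : m02 0 = 1 ∧ m02 1 = 0 ∧ m02 2 = 1 := by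
  refine ⟨?_, ?_, ?_⟩ <;> simp [m02, Finsupp.single_apply]

lemma pair_le {m : Fin 3 →₀ ℕ} (d : Fin 3 →₀ ℕ)
    (h : ∀ x : Fin 3, m x ≤ d x) : m ≤ d := Finsupp.le_def.mpr h

lemma m12_le (d : Fin 3 →₀ ℕ) : m12 ≤ d ↔ 1 ≤ d 1 ∧ 1 ≤ d 2 := by
  rw [Finsupp.le_def]
  constructor
  · intro h
    have h1 := h 1; have h2 := h 2
    rw [m12_app.2.1] at h1; rw [m12_app.2.2] at h2
    exact ⟨h1, h2⟩
  · rintro ⟨h1, h2⟩ a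
    fin_cases a
    · show m12 0 ≤ d 0; rw [m12_app.1]; omega
    · show m12 1 ≤ d 1; rw [m12_app.2.1]; exact h1
    · show m12 2 ≤ d 2; rw [m12_app.2.2]; exact h2

lemma m01_le (d : Fin 3 →₀ ℕ) : m01 ≤ d ↔ 1 ≤ d 0 ∧ 1 ≤ d 1 := by
  rw [Finsupp.le_def]
  constructor
  · intro h
    have h1 := h 0; have h2 := h 1
    rw [m01_app.1] at h1; rw [m01_app.2.1] at h2
    exact ⟨h1, h2⟩
  · rintro ⟨h1, h2⟩ a
    fin_cases a
    · show m01 0 ≤ d 0; rw [m01_app.1]; exact h1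
    · show m01 1 ≤ d 1; rw [m01_app.2.1]; exact h2
    · show m01 2 ≤ d 2; rw [m01_app.2.2]; omega

lemma m02_le (d : Fin 3 →₀ ℕ) : m02 ≤ d ↔ 1 ≤ d 0 ∧ 1 ≤ d 2 := by
  rw [Finsupp.le_def]
  constructor
  · intro h
    have h1 := h 0; have h2 := h 2
    rw [m02_app.1] at h1; rw [m02_app.2.2] at h2
    exact ⟨h1, h2⟩
  · rintro ⟨h1, h2⟩ a
    fin_cases a
    · show m02 0 ≤ d 0; rw [m02_app.1]; exact h1
    · show m02 1 ≤ d 1; rw [m02_app.2.1]; omega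
    · show m02 2 ≤ d 2; rw [m02_app.2.2]; exact h2

lemma r_tel (i a b : ℕ) (ha : 1 ≤ a) (hb : 1 ≤ b) :
    r i a b - r i (a-1) (b-1) = bal i (a+b) := by
  unfold r
  rw [sum_range_succ' (fun k => bal i (a + b - 2*k)) (min a b)]
  have hmin : min (a-1) (b-1) + 1 = min a b := by omega
  rw [hmin]
  have hcong : ∀ k ∈ range (min a b), bal i (a + b - 2*(k+1))
      = bal i ((a-1) + (b-1) - 2*k) := by
    intro k hk; exact bal_congr i (by omega)
  rw [sum_congr rfl hcong]
  simp only [mul_zero, Nat.sub_zero]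
  ring

lemma r_min0 (i a b : ℕ) (h : a = 0 ∨ b = 0) : r i a b = bal i (a+b) := by
  unfold r
  have hmin : min a b = 0 := by omega
  rw [hmin, sum_range_one]
  exact bal_congr i (by omega)

lemma A1 : Sser * (1 - X 1 * X 2) = Wser := by
  apply MvPowerSeries.ext; intro d
  rw [mul_one_sub, map_sub, X_mul_X 1 2, ← m12, MvPowerSeries.coeff_mul_monomial]
  simp only [MvPowerSeries.coeff_apply, mul_one]
  show r (d 0) (d 1) (d 2) - (if m12 ≤ d then Sser (d - m12) else 0)
      = bal (d 0) (d 1 + d 2)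
  have hsub : Sser (d - m12) = r (d 0) (d 1 - 1) (d 2 - 1) := by
    show r ((d - m12) 0) ((d - m12) 1) ((d - m12) 2) = _
    rw [Finsupp.tsub_apply, Finsupp.tsub_apply, Finsupp.tsub_apply,
      m12_app.1, m12_app.2.1, m12_app.2.2, Nat.sub_zero]
  by_cases h : 1 ≤ d 1 ∧ 1 ≤ d 2
  · rw [if_pos ((m12_le d).mpr h), hsub]
    exact r_tel _ _ _ h.1 h.2
  · rw [if_neg (fun hc => h ((m12_le d).mp hc)), sub_zero]
    exact r_min0 _ _ _ (by omega)

lemma A2arith (i a b : ℕ) :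
    bal i (a+b) - (if 1 ≤ i ∧ 1 ≤ a then
        ∑ n ∈ range ((i-1)+1), bal (i-1-n) (a-1+b) * gam n else 0)
      = if a = 0 then bal i b else 0 := by
  by_cases ha : a = 0
  · subst ha
    rw [if_neg (by omega), sub_zero, if_pos rfl, zero_add]
  · rw [if_neg ha]
    by_cases hi : 1 ≤ i
    · rw [if_pos ⟨hi, by omega⟩]
      obtain ⟨i', rfl⟩ : ∃ i', i = i'+1 := ⟨i-1, by omega⟩
      rw [show i'+1-1 = i' by omega]
      rw [show bal (i'+1) (a+b) = bal (i'+1) ((a-1+b)+1) from bal_congr _ (by omega),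
        bal_conv i' (a-1+b), sub_eq_zero]
      exact sum_congr rfl (fun n hn => by ring)
    · rw [if_neg (by omega), sub_zero]
      obtain rfl : i = 0 := by omega
      simp only [bal]
      rw [if_neg (by omega)]

lemma A3arith (i b : ℕ) :
    bal i b - (if 1 ≤ i ∧ 1 ≤ b then
        ∑ n ∈ range ((i-1)+1), bal (i-1-n) (b-1) * gam n else 0)
      = if b = 0 then gam i else 0 := by
  by_cases hb : b = 0
  · subst hb
    rw [if_neg (by omega), sub_zero, if_pos rfl]
    exact bal_zero i
  · rw [if_neg hb]
    by_cases hi : 1 ≤ i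
    · rw [if_pos ⟨hi, by omega⟩]
      obtain ⟨i', rfl⟩ : ∃ i', i = i'+1 := ⟨i-1, by omega⟩
      rw [show i'+1-1 = i' by omega]
      rw [show bal (i'+1) b = bal (i'+1) ((b-1)+1) from bal_congr _ (by omega),
        bal_conv i' (b-1), sub_eq_zero]
      exact sum_congr rfl (fun n hn => by ring)
    · rw [if_neg (by omega), sub_zero]
      obtain rfl : i = 0 := by omega
      simp only [bal]
      rw [if_neg hb]

lemma A2 : Wser * (1 - X 0 * X 1 * catalanX2) = CTz := by
  apply MvPowerSeries.ext; intro d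
  have hre : Wser * (X 0 * X 1 * catalanX2) = (Wser * catalanX2) * monomial m01 1 := by
    rw [X_mul_X 0 1, ← m01]; ring
  rw [mul_one_sub, map_sub, hre, MvPowerSeries.coeff_mul_monomial]
  simp only [MvPowerSeries.coeff_apply, mul_one]
  show bal (d 0) (d 1 + d 2) - (if m01 ≤ d then (Wser * catalanX2) (d - m01) else 0)
      = CTz d
  have hWc : (Wser * catalanX2) (d - m01)
      = ∑ n ∈ range ((d 0 - 1)+1), bal (d 0 - 1 - n) ((d 1 - 1) + d 2) * gam n := by
    have h := coeff_mul_cat Wser (d - m01)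
    rw [MvPowerSeries.coeff_apply] at h
    rw [h, show (d - m01) 0 = d 0 - 1 from by rw [Finsupp.tsub_apply, m01_app.1]]
    apply sum_congr rfl; intro n hn
    show bal ((d - m01 - Finsupp.single 0 n : Fin 3 →₀ ℕ) 0)
        ((d - m01 - Finsupp.single 0 n : Fin 3 →₀ ℕ) 1
          + (d - m01 - Finsupp.single 0 n : Fin 3 →₀ ℕ) 2) * gam n = _
    rw [Finsupp.tsub_apply, Finsupp.tsub_apply, Finsupp.tsub_apply, Finsupp.tsub_apply,
      Finsupp.tsub_apply, Finsupp.tsub_apply, m01_app.1, m01_app.2.1, m01_app.2.2,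
      Finsupp.single_eq_same, Finsupp.single_eq_of_ne (by decide : (1:Fin 3) ≠ 0),
      Finsupp.single_eq_of_ne (by decide : (2:Fin 3) ≠ 0)]
    norm_num
  show _ = if d 1 = 0 then bal (d 0) (d 2) else 0
  by_cases h : 1 ≤ d 0 ∧ 1 ≤ d 1
  · rw [if_pos ((m01_le d).mpr h), hWc]
    have h2 := A2arith (d 0) (d 1) (d 2)
    rw [if_pos h] at h2
    exact h2
  · rw [if_neg (fun hc => h ((m01_le d).mp hc)), sub_zero]
    have h2 := A2arith (d 0) (d 1) (d 2)
    rw [if_neg h, sub_zero] at h2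
    exact h2

lemma A3 : CTz * (1 - X 0 * X 2 * catalanX2) = catalanX2 := by
  apply MvPowerSeries.ext; intro d
  have hre : CTz * (X 0 * X 2 * catalanX2) = (CTz * catalanX2) * monomial m02 1 := by
    rw [X_mul_X 0 2, ← m02]; ring
  rw [mul_one_sub, map_sub, hre, MvPowerSeries.coeff_mul_monomial]
  simp only [MvPowerSeries.coeff_apply, mul_one]
  have hCc : (CTz * catalanX2) (d - m02)
      = ∑ n ∈ range ((d 0 - 1)+1),
          (if d 1 = 0 then bal (d 0 - 1 - n) (d 2 - 1) else 0) * gam n := by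
    have h := coeff_mul_cat CTz (d - m02)
    rw [MvPowerSeries.coeff_apply] at h
    rw [h, show (d - m02) 0 = d 0 - 1 from by rw [Finsupp.tsub_apply, m02_app.1]]
    apply sum_congr rfl; intro n hn
    show (if (d - m02 - Finsupp.single 0 n : Fin 3 →₀ ℕ) 1 = 0 then
        bal ((d - m02 - Finsupp.single 0 n : Fin 3 →₀ ℕ) 0)
          ((d - m02 - Finsupp.single 0 n : Fin 3 →₀ ℕ) 2) else 0) * gam n = _
    rw [Finsupp.tsub_apply, Finsupp.tsub_apply, Finsupp.tsub_apply, Finsupp.tsub_apply,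
      Finsupp.tsub_apply, Finsupp.tsub_apply, m02_app.1, m02_app.2.1, m02_app.2.2,
      Finsupp.single_eq_same, Finsupp.single_eq_of_ne (by decide : (1:Fin 3) ≠ 0),
      Finsupp.single_eq_of_ne (by decide : (2:Fin 3) ≠ 0)]
    norm_num
  rw [cat_coeff]
  show (if d 1 = 0 then bal (d 0) (d 2) else 0)
      - (if m02 ≤ d then (CTz * catalanX2) (d - m02) else 0) = _
  by_cases hd1 : d 1 = 0
  · rw [if_pos hd1]
    have hfin : (if d 2 = 0 then gam (d 0) else 0)
        = if d 1 = 0 ∧ d 2 = 0 then gam (d 0) else 0 := by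
      by_cases hd2 : d 2 = 0
      · rw [if_pos hd2, if_pos ⟨hd1, hd2⟩]
      · rw [if_neg hd2, if_neg (by tauto)]
    by_cases h : 1 ≤ d 0 ∧ 1 ≤ d 2
    · rw [if_pos ((m02_le d).mpr h), hCc,
        sum_congr rfl (fun n _ => by rw [if_pos hd1])]
      have h2 := A3arith (d 0) (d 2)
      rw [if_pos h] at h2
      rw [h2, hfin]
    · rw [if_neg (fun hc => h ((m02_le d).mp hc)), sub_zero]
      have h2 := A3arith (d 0) (d 2)
      rw [if_neg h, sub_zero] at h2
      rw [h2, hfin]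
  · rw [if_neg hd1, if_neg (by tauto : ¬ (d 1 = 0 ∧ d 2 = 0))]
    by_cases h : m02 ≤ d
    · rw [if_pos h, hCc, sum_congr rfl (fun n _ => by rw [if_neg hd1, zero_mul])]
      simp
    · rw [if_neg h]; simp

lemma hGgfS : Ggf = Sser := by
  funext d
  show ((Nat.card (PathSet (d 0) (d 1) (d 2)) : ℚ)) = r (d 0) (d 1) (d 2)
  exact card_eq_r _ _ _

lemma hc0 : constantCoeff catalanX2 = 1 := by
  show catalanX2 0 = 1
  rw [cat_coeff]
  simp [gam]

lemma hcu1 : constantCoeff (1 - X 0 * X 1 * catalanX2) ≠ 0 := by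
  rw [map_sub, map_one, map_mul, map_mul, constantCoeff_X, constantCoeff_X, hc0]
  norm_num

lemma hcu2 : constantCoeff (1 - X 0 * X 2 * catalanX2) ≠ 0 := by
  rw [map_sub, map_one, map_mul, map_mul, constantCoeff_X, constantCoeff_X, hc0]
  norm_num

lemma hcu3 : constantCoeff (catalanX2 * (1 - X 1 * X 2)) ≠ 0 := by
  rw [map_mul, hc0, map_sub, map_one, map_mul, constantCoeff_X, constantCoeff_X]
  norm_num

open MvPowerSeries in
/-- `G(x,y,z) = F(x,y)·F(x,z)/(c(x²)·(1 − yz))`. -/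
theorem Ggf_eq :
    Ggf = Fxy * Fxz * (catalanX2 * (1 - X 1 * X 2))⁻¹ := by
  have key : Sser * (1 - X 1 * X 2) * (1 - X 0 * X 1 * catalanX2)
      * (1 - X 0 * X 2 * catalanX2) = catalanX2 := by
    rw [A1, A2, A3]
  have hM : (1 - X 0 * X 1 * catalanX2) * (1 - X 0 * X 2 * catalanX2)
      * (catalanX2 * (1 - X 1 * X 2)) ≠ (0 : MvPowerSeries (Fin 3) ℚ) := by
    intro h0
    have h1 := congrArg (constantCoeff) h0
    rw [map_mul, map_mul, map_zero] at h1
    rcases mul_eq_zero.mp h1 with h2 | h2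
    · rcases mul_eq_zero.mp h2 with h3 | h3
      · exact hcu1 h3
      · exact hcu2 h3
    · exact hcu3 h2
  apply mul_right_cancel₀ hM
  rw [hGgfS]
  have hL : Sser * ((1 - X 0 * X 1 * catalanX2) * (1 - X 0 * X 2 * catalanX2)
      * (catalanX2 * (1 - X 1 * X 2)))
      = catalanX2 * catalanX2 := by
    have e : Sser * ((1 - X 0 * X 1 * catalanX2) * (1 - X 0 * X 2 * catalanX2)
        * (catalanX2 * (1 - X 1 * X 2)))
        = (Sser * (1 - X 1 * X 2) * (1 - X 0 * X 1 * catalanX2)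
            * (1 - X 0 * X 2 * catalanX2)) * catalanX2 := by ring
    rw [e, key]
  have hR : Fxy * Fxz * (catalanX2 * (1 - X 1 * X 2))⁻¹
      * ((1 - X 0 * X 1 * catalanX2) * (1 - X 0 * X 2 * catalanX2)
        * (catalanX2 * (1 - X 1 * X 2)))
      = catalanX2 * catalanX2 := by
    have e : catalanX2 * (1 - X 0 * X 1 * catalanX2)⁻¹
        * (catalanX2 * (1 - X 0 * X 2 * catalanX2)⁻¹)
        * (catalanX2 * (1 - X 1 * X 2))⁻¹
        * ((1 - X 0 * X 1 * catalanX2) * (1 - X 0 * X 2 * catalanX2)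
          * (catalanX2 * (1 - X 1 * X 2)))
        = catalanX2 * catalanX2
          * (((1 - X 0 * X 1 * catalanX2) * (1 - X 0 * X 1 * catalanX2)⁻¹)
            * (((1 - X 0 * X 2 * catalanX2) * (1 - X 0 * X 2 * catalanX2)⁻¹)
              * ((catalanX2 * (1 - X 1 * X 2)) * (catalanX2 * (1 - X 1 * X 2))⁻¹))) := by
      ring
    rw [Fxy, Fxz, e, MvPowerSeries.mul_inv_cancel _ hcu1,
      MvPowerSeries.mul_inv_cancel _ hcu2, MvPowerSeries.mul_inv_cancel _ hcu3]
    simp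
  rw [hL, hR]
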